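/- For some forward trie T_f with n nodes over a constant-size alphabet, the suffix tree STree(T_f) has Ω(n²) nodes and Ω(n²) edges. -/

import Mathlib

/-- A rooted labeled tree on `n` nodes: node `0` is the root, every non-root
node `v` has a parent with smaller index, and `label v` is the character on
the edge between `v` and its parent. -/
structure LTree (n : ℕ) (A : Type*) where
  parent : Fin n → Fin n
  label : Fin n → A
  hp : ∀ v : Fin n, v.val ≠ 0 → (parent v).val < v.val

namespace LTree

variable {n : ℕ} {A : Type*}

/-- The string spelled by the path from node `v` up to the root
(read in the leaf-to-root direction). -/
def strUp (T : LTree n A) (v : Fin n) : List A :=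
  if h : v.val = 0 then []
  else T.label v :: T.strUp (T.parent v)
termination_by v.val
decreasing_by exact T.hp v h

/-- Substrings of the backward trie: strings spelled by upward paths from a
node to one of its ancestors (prefixes of the upward root-paths). -/
def SubstrU (T : LTree n A) : Set (List A) :=
  { s | ∃ (v : Fin n) (m : ℕ), s = (T.strUp v).take m }

/-- Substrings of the forward trie: strings spelled by downward paths from a
node to one of its descendants. -/
def SubstrD (T : LTree n A) : Set (List A) :=
  { s | ∃ (v : Fin n) (m : ℕ), s = ((T.strUp v).take m).reverse }

/-- A node is a leaf if no (non-root) node has it as parent. -/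
def isLeaf (T : LTree n A) (v : Fin n) : Prop :=
  ∀ u : Fin n, u.val ≠ 0 → T.parent u ≠ v

/-- Suffixes of the forward trie: strings spelled by downward paths from any
node to a leaf below it. -/
def SuffixF (T : LTree n A) : Set (List A) :=
  { s | ∃ v : Fin n, T.isLeaf v ∧ ∃ m : ℕ, s = ((T.strUp v).take m).reverse }

/-- Suffixes of the backward trie: strings spelled by the paths from any
non-root node up to the root. -/
def SuffixB (T : LTree n A) : Set (List A) :=
  { s | ∃ v : Fin n, v.val ≠ 0 ∧ s = T.strUp v }

/-- The trie condition: out-going edges of each node (equivalently, edges to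
the children of each node) carry mutually distinct characters. -/
def isTrie (T : LTree n A) : Prop :=
  ∀ u v : Fin n, u.val ≠ 0 → v.val ≠ 0 →
    T.parent u = T.parent v → T.label u = T.label v → u = v

/-- `X` is right-maximal on the forward trie: it has two distinct right
extensions, or an occurrence ending at a leaf. -/
def rightMaximalF (T : LTree n A) (X : List A) : Prop :=
  (∃ a b : A, a ≠ b ∧ X ++ [a] ∈ T.SubstrD ∧ X ++ [b] ∈ T.SubstrD) ∨
  (∃ v : Fin n, T.isLeaf v ∧ ∃ m : ℕ, X = ((T.strUp v).take m).reverse)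

/-- `X` is left-maximal on the forward trie: it has two distinct left
extensions, or an occurrence beginning at the root. -/
def leftMaximalF (T : LTree n A) (X : List A) : Prop :=
  (∃ a b : A, a ≠ b ∧ (a :: X) ∈ T.SubstrD ∧ (b :: X) ∈ T.SubstrD) ∨
  (∃ v : Fin n, X = (T.strUp v).reverse)

/-- `Y` is left-maximal on the backward trie: two distinct left extensions,
or an occurrence beginning at a leaf. -/
def leftMaximalB (T : LTree n A) (Y : List A) : Prop :=
  (∃ a b : A, a ≠ b ∧ (a :: Y) ∈ T.SubstrU ∧ (b :: Y) ∈ T.SubstrU) ∨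
  (∃ v : Fin n, T.isLeaf v ∧ ∃ m : ℕ, Y = (T.strUp v).take m)

/-- `Y` is right-maximal on the backward trie: two distinct right extensions,
or an occurrence ending at the root. -/
def rightMaximalB (T : LTree n A) (Y : List A) : Prop :=
  (∃ a b : A, a ≠ b ∧ Y ++ [a] ∈ T.SubstrU ∧ Y ++ [b] ∈ T.SubstrU) ∨
  (∃ v : Fin n, Y = T.strUp v)

end LTree

namespace Stmt7Aux
open List

def comb (k : ℕ) (hk : 0 < k) : LTree (3*k+1) (Fin 3) where
  parent v := if v.val ≤ 2*k then ⟨v.val - 1, by have := v.isLt; omega⟩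
              else ⟨v.val - k, by have := v.isLt; omega⟩
  label v := if v.val = 0 then 0 else if v.val ≤ k then 0
             else if v.val ≤ 2*k then 1 else 2
  hp v h := by split <;> simp only [] <;> omega

lemma comb_parent (k : ℕ) (hk : 0 < k) (v : Fin (3*k+1)) :
    ((comb k hk).parent v).val = if v.val ≤ 2*k then v.val - 1 else v.val - k := by
  show (if v.val ≤ 2*k then (⟨v.val - 1, by have := v.isLt; omega⟩ : Fin (3*k+1))
        else ⟨v.val - k, by have := v.isLt; omega⟩).val = _
  split <;> rfl

lemma comb_label (k : ℕ) (hk : 0 < k) (v : Fin (3*k+1)) :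
    (comb k hk).label v = if v.val = 0 then 0 else if v.val ≤ k then 0
             else if v.val ≤ 2*k then 1 else 2 := rfl

lemma strUp_path (k : ℕ) (hk : 0 < k) : ∀ p, (h : p ≤ 2*k) →
    (comb k hk).strUp ⟨p, by omega⟩ =
      if p ≤ k then replicate p 0 else replicate (p - k) 1 ++ replicate k 0 := by
  intro p
  induction p with
  | zero => intro h; rw [LTree.strUp]; simp
  | succ p ih =>
    intro h
    rw [LTree.strUp, dif_neg (by simp)]
    have hpar : (comb k hk).parent ⟨p+1, by omega⟩ = ⟨p, by omega⟩ := by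
      apply Fin.ext; rw [comb_parent]; simp; omega
    rw [hpar, ih (by omega), comb_label]
    simp only [Fin.mk.injEq]
    by_cases h1 : p + 1 ≤ k
    · rw [if_neg (by omega), if_pos (by omega), if_pos h1, if_pos (by omega)]
      simp [List.replicate_succ]
    · rw [if_neg (by omega), if_neg h1, if_neg h1, if_pos (by omega)]
      by_cases h2 : p ≤ k
      · have : p = k := by omega
        subst this
        rw [if_pos le_rfl]
        simp [List.replicate_succ]
      · rw [if_neg h2]
        have : p + 1 - k = (p - k) + 1 := by omega
        rw [this, List.replicate_succ]
        simp

lemma strUp_leaf (k : ℕ) (hk : 0 < k) (i : ℕ) (h1 : 1 ≤ i) (h2 : i ≤ k) :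
    (comb k hk).strUp ⟨2*k+i, by omega⟩ =
      2 :: (replicate i 1 ++ replicate k 0) := by
  have hpar : (comb k hk).parent ⟨2*k+i, by omega⟩ = ⟨k+i, by omega⟩ := by
    apply Fin.ext
    rw [comb_parent]
    show (if 2*k+i ≤ 2*k then 2*k+i - 1 else 2*k+i - k) = k+i
    rw [if_neg (by omega)]; omega
  rw [LTree.strUp, dif_neg (show ¬(2*k+i = 0) by omega), hpar,
      strUp_path k hk (k+i) (by omega), comb_label]
  show (if 2*k+i = 0 then (0:Fin 3) else if 2*k+i ≤ k then 0
        else if 2*k+i ≤ 2*k then 1 else 2) ::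
      (if k+i ≤ k then replicate (k+i) 0 else replicate (k+i-k) 1 ++ replicate k 0) = _
  rw [if_neg (by omega), if_neg (by omega), if_neg (by omega), if_neg (show ¬(k+i ≤ k) by omega)]
  congr 3
  omega

lemma strUp_length_le {n : ℕ} {A : Type*} (T : LTree n A) (v : Fin n) :
    (T.strUp v).length ≤ v.val := by
  have key : ∀ (N : ℕ) (v : Fin n), v.val ≤ N → (T.strUp v).length ≤ v.val := by
    intro N
    induction N with
    | zero =>
      intro v hv
      rw [LTree.strUp, dif_pos (by omega)]
      simp
    | succ N ih =>
      intro v hv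
      rw [LTree.strUp]
      split
      · simp
      · next h =>
        have h1 := T.hp v h
        have h2 := ih (T.parent v) (by omega)
        simp only [List.length_cons]
        omega
  exact key v.val v le_rfl

lemma substrD_finite {n : ℕ} {A : Type*} [Finite A] (T : LTree n A) :
    T.SubstrD.Finite := by
  apply Set.Finite.subset (List.finite_length_le A n)
  rintro s ⟨v, m, rfl⟩
  simp only [Set.mem_setOf_eq, List.length_reverse, List.length_take]
  have h1 := strUp_length_le T v
  have h2 := v.isLt
  omega

lemma comb_isLeaf (k : ℕ) (hk : 0 < k) (i : ℕ) (h1 : 1 ≤ i) (h2 : i ≤ k) :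
    (comb k hk).isLeaf ⟨2*k+i, by omega⟩ := by
  intro u hu hpar
  have h3 : ((comb k hk).parent u).val = 2*k+i := congrArg Fin.val hpar
  rw [comb_parent] at h3
  have h4 := u.isLt
  split_ifs at h3 <;> omega

lemma comb_isTrie (k : ℕ) (hk : 0 < k) : (comb k hk).isTrie := by
  intro u v hu hv hpar hlab
  have h3 := congrArg Fin.val hpar
  rw [comb_parent, comb_parent] at h3
  rw [comb_label, comb_label] at hlab
  have h4 := u.isLt
  have h5 := v.isLt
  apply Fin.ext
  split_ifs at h3 hlab <;> first | omega | exact absurd hlab (by decide)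

lemma mem_S (k : ℕ) (hk : 0 < k) (t i : ℕ) (ht : t ≤ k) (hi1 : 1 ≤ i) (hi2 : i ≤ k) :
    replicate t (0:Fin 3) ++ replicate i 1 ++ [2] ∈
      {X | X ∈ (comb k hk).SubstrD ∧ (comb k hk).rightMaximalF X} := by
  have key : replicate t (0:Fin 3) ++ replicate i 1 ++ [2] =
      (((comb k hk).strUp ⟨2*k+i, by omega⟩).take (1 + i + t)).reverse := by
    rw [strUp_leaf k hk i hi1 hi2]
    have hlen : 1 + i = ((2:Fin 3) :: replicate i 1).length := by
      simp [Nat.add_comm]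
    have : (2:Fin 3) :: (replicate i 1 ++ replicate k 0) =
        ((2:Fin 3) :: replicate i 1) ++ replicate k 0 := by simp
    rw [this, hlen, List.take_append, List.take_replicate,
        Nat.add_sub_cancel_left, min_eq_left ht]
    simp [List.reverse_append]
    rw [List.take_of_length_le (by simp only [List.length_cons, List.length_replicate]; omega)]
    simp
  constructor
  · exact ⟨⟨2*k+i, by omega⟩, 1 + i + t, key⟩
  · exact Or.inr ⟨⟨2*k+i, by omega⟩, comb_isLeaf k hk i hi1 hi2, 1 + i + t, key⟩

def g (k : ℕ) (p : Fin (k+1) × Fin k) : List (Fin 3) :=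
  replicate p.1.val 0 ++ replicate (p.2.val + 1) 1 ++ [2]

lemma g_injective (k : ℕ) : Function.Injective (g k) := by
  intro p q h
  unfold g at h
  have hc := congrArg (List.count (0:Fin 3)) h
  have hl := congrArg List.length h
  simp only [List.count_append, List.count_replicate, List.length_append,
    List.length_replicate, List.length_cons, List.length_nil,
    List.count_cons, List.count_nil] at hc hl
  norm_num at hc hl
  have h1 : p.1.val = q.1.val := hc
  have h2 : p.2.val = q.2.val := by omega
  exact Prod.ext (Fin.ext h1) (Fin.ext h2)

end Stmt7Aux


/-- for some forward trie with `n` nodes over a constant-size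
alphabet (here of size 3), the suffix tree has `Ω(n²)` nodes and `Ω(n²)`
edges; the nodes of `STree(T_f)` are the right-maximal substrings of `T_f`
(plus the root, counted among them via the empty string), and the number of
edges is the number of non-root nodes. -/
theorem stmt7 :
    ∀ j : ℕ, 1 ≤ j → ∃ (n : ℕ) (T : LTree n (Fin 3)),
      T.isTrie ∧ 2 ^ j ≤ n ∧ n ≤ 4 * 2 ^ j ∧
      2 ^ j * (2 ^ j + 1) ≤ {X | X ∈ T.SubstrD ∧ T.rightMaximalF X}.ncard ∧
      2 ^ j * 2 ^ j ≤ {X | X ∈ T.SubstrD ∧ T.rightMaximalF X}.ncard - 1 := by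
  
  intro j hj
  set k := 2 ^ j with hkdef
  have hk2 : 2 ≤ k := by
    calc 2 = 2 ^ 1 := rfl
    _ ≤ 2 ^ j := Nat.pow_le_pow_right (by norm_num) hj
  have hk : 0 < k := by omega
  refine ⟨3*k+1, Stmt7Aux.comb k hk, Stmt7Aux.comb_isTrie k hk, by omega, by omega, ?_⟩
  set S := {X | X ∈ (Stmt7Aux.comb k hk).SubstrD ∧ (Stmt7Aux.comb k hk).rightMaximalF X} with hS
  have hSfin : S.Finite := by
    apply Set.Finite.subset (Stmt7Aux.substrD_finite (Stmt7Aux.comb k hk))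
    intro X hX
    exact hX.1
  have hsub : Set.range (Stmt7Aux.g k) ⊆ S := by
    rintro _ ⟨⟨t, i⟩, rfl⟩
    exact Stmt7Aux.mem_S k hk t.val (i.val + 1) (by omega) (by omega)
      (by have := i.isLt; omega)
  have hcard : (Set.range (Stmt7Aux.g k)).ncard = (k+1) * k := by
    rw [← Set.image_univ, Set.ncard_image_of_injective _ (Stmt7Aux.g_injective k),
      Set.ncard_univ]
    simp [Nat.card_eq_fintype_card]
  have hmain : k * (k + 1) ≤ S.ncard := by
    rw [mul_comm, ← hcard]
    exact Set.ncard_le_ncard hsub hSfin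
  have hx : k * (k + 1) = k * k + k := by ring
  exact ⟨hmain, by omega⟩
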